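/- Let \(A\) be a symmetric \(3\times 3\) complex matrix and \(\xi\in\mathbb{R}^3\). Then \[-2|A\xi|^2|\xi|^2+\tfrac12|\xi^T A\xi|^2+\tfrac12\,\xi^T A\xi\cdot\overline{\operatorname{tr}A}\,|\xi|^2+\tfrac12\,\xi^T\bar A\xi\cdot\operatorname{tr}A\,|\xi|^2-\tfrac12|\operatorname{tr}A|^2|\xi|^4+|A|^2|\xi|^4\ \geq\ 0,\] where \(|A|^2=\sum_{i,j}|a_{ij}|^2\). -/
import Mathlib

open Finset

/-- The quadratic expression
`-2|Aξ|²|ξ|² + ½|ξᵀAξ|² + ½ ξᵀAξ · conj(tr A) |ξ|² + ½ ξᵀĀξ · tr A |ξ|²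
 - ½|tr A|²|ξ|⁴ + |A|²|ξ|⁴`. -/
noncomputable def secondVariationIntegrand (A : Matrix (Fin 3) (Fin 3) ℂ) (ξ : Fin 3 → ℝ) : ℂ :=
  let ξC : Fin 3 → ℂ := fun i => (ξ i : ℂ)
  let n2 : ℂ := ((∑ i, ξ i ^ 2 : ℝ) : ℂ)
  let Aξ2 : ℂ := ((∑ i, Complex.normSq (∑ j, A i j * ξC j) : ℝ) : ℂ)
  let q : ℂ := ∑ i, ∑ j, A i j * ξC i * ξC j
  let qbar : ℂ := ∑ i, ∑ j, (starRingEnd ℂ) (A i j) * ξC i * ξC j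
  let trA : ℂ := ∑ i, A i i
  let nA2 : ℂ := ((∑ i, ∑ j, Complex.normSq (A i j) : ℝ) : ℂ)
  (-2) * Aξ2 * n2 + (1 / 2) * ((Complex.normSq q : ℝ) : ℂ)
    + (1 / 2) * q * (starRingEnd ℂ) trA * n2 + (1 / 2) * qbar * trA * n2
    - (1 / 2) * ((Complex.normSq trA : ℝ) : ℂ) * n2 ^ 2 + nA2 * n2 ^ 2

set_option maxHeartbeats 1000000 in
/-- For a symmetric complex 3×3 matrix `A` and a real vector `ξ`, the expression
is real and nonnegative. -/
theorem secondVariationIntegrand_nonneg (A : Matrix (Fin 3) (Fin 3) ℂ)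
    (hA : A.IsSymm) (ξ : Fin 3 → ℝ) :
    0 ≤ (secondVariationIntegrand A ξ).re ∧ (secondVariationIntegrand A ξ).im = 0 := by
  have h10 : A 1 0 = A 0 1 := hA.apply 0 1
  have h20 : A 2 0 = A 0 2 := hA.apply 0 2
  have h21 : A 2 1 = A 1 2 := hA.apply 1 2
  by_cases h0 : ξ 0 ^ 2 + ξ 1 ^ 2 + ξ 2 ^ 2 = 0
  · have h1 : ξ 0 ^ 2 ≤ 0 := by nlinarith [sq_nonneg (ξ 1), sq_nonneg (ξ 2)]
    have h2 : ξ 1 ^ 2 ≤ 0 := by nlinarith [sq_nonneg (ξ 0), sq_nonneg (ξ 2)]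
    have h3 : ξ 2 ^ 2 ≤ 0 := by nlinarith [sq_nonneg (ξ 0), sq_nonneg (ξ 1)]
    have hx : ξ 0 = 0 := sq_eq_zero_iff.1 (le_antisymm h1 (sq_nonneg _))
    have hy : ξ 1 = 0 := sq_eq_zero_iff.1 (le_antisymm h2 (sq_nonneg _))
    have hz : ξ 2 = 0 := sq_eq_zero_iff.1 (le_antisymm h3 (sq_nonneg _))
    simp [secondVariationIntegrand, Fin.sum_univ_three, hx, hy, hz]
  · have hpos : 0 < ξ 0 ^ 2 + ξ 1 ^ 2 + ξ 2 ^ 2 :=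
      lt_of_le_of_ne (by positivity) (Ne.symm h0)
    have hn4 : 0 < 4 * (ξ 0 ^ 2 + ξ 1 ^ 2 + ξ 2 ^ 2) ^ 2 :=
      mul_pos (by norm_num) (pow_pos hpos 2)
    have hid : ((4 * (ξ 0 ^ 2 + ξ 1 ^ 2 + ξ 2 ^ 2) ^ 2 : ℝ) : ℂ) * secondVariationIntegrand A ξ
        = ((Complex.normSq (2*(((ξ 0 : ℂ)^2+(ξ 1 : ℂ)^2+(ξ 2 : ℂ)^2)^2*(A 0 0) - ((ξ 0 : ℂ)^2+(ξ 1 : ℂ)^2+(ξ 2 : ℂ)^2)*(ξ 0 : ℂ)*((A 0 0)*(ξ 0 : ℂ)+(A 0 1)*(ξ 1 : ℂ)+(A 0 2)*(ξ 2 : ℂ)) - ((ξ 0 : ℂ)^2+(ξ 1 : ℂ)^2+(ξ 2 : ℂ)^2)*((A 0 0)*(ξ 0 : ℂ)+(A 0 1)*(ξ 1 : ℂ)+(A 0 2)*(ξ 2 : ℂ))*(ξ 0 : ℂ) + (((A 0 0)*(ξ 0 : ℂ)+(A 0 1)*(ξ 1 : ℂ)+(A 0 2)*(ξ 2 : ℂ))*(ξ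 0 : ℂ)+((A 0 1)*(ξ 0 : ℂ)+(A 1 1)*(ξ 1 : ℂ)+(A 1 2)*(ξ 2 : ℂ))*(ξ 1 : ℂ)+((A 0 2)*(ξ 0 : ℂ)+(A 1 2)*(ξ 1 : ℂ)+(A 2 2)*(ξ 2 : ℂ))*(ξ 2 : ℂ))*(ξ 0 : ℂ)*(ξ 0 : ℂ)) - (((ξ 0 : ℂ)^2+(ξ 1 : ℂ)^2+(ξ 2 : ℂ)^2)*((A 0 0)+(A 1 1)+(A 2 2))-(((A 0 0)*(ξ 0 : ℂ)+(A 0 1)*(ξ 1 : ℂ)+(A 0 2)*(ξ 2 : ℂ))*(ξ 0 : ℂ)+((A 0 1)*(ξ 0 : ℂ)+(A 1 1)*(ξ 1 : ℂ)+(A 1 2)*(ξ 2 : ℂ))*(ξ 1 : ℂ)+((A 0 2)*(ξ 0 : ℂ)+(A 1 2)*(ξ 1 : ℂ)+(A 2 2)*(ξ 2 : ℂ))*(ξ 2 : ℂ)))*(((ξ 0 : ℂ)^2+(ξ 1 : ℂ)^2+(ξ 2 : ℂ)^2) - (ξ 0 : ℂ)*(ξ 0 : ℂ))) + Complex.normSq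 (2*(((ξ 0 : ℂ)^2+(ξ 1 : ℂ)^2+(ξ 2 : ℂ)^2)^2*(A 1 1) - ((ξ 0 : ℂ)^2+(ξ 1 : ℂ)^2+(ξ 2 : ℂ)^2)*(ξ 1 : ℂ)*((A 0 1)*(ξ 0 : ℂ)+(A 1 1)*(ξ 1 : ℂ)+(A 1 2)*(ξ 2 : ℂ)) - ((ξ 0 : ℂ)^2+(ξ 1 : ℂ)^2+(ξ 2 : ℂ)^2)*((A 0 1)*(ξ 0 : ℂ)+(A 1 1)*(ξ 1 : ℂ)+(A 1 2)*(ξ 2 : ℂ))*(ξ 1 : ℂ) + (((A 0 0)*(ξ 0 : ℂ)+(A 0 1)*(ξ 1 : ℂ)+(A 0 2)*(ξ 2 : ℂ))*(ξ 0 : ℂ)+((A 0 1)*(ξ 0 : ℂ)+(A 1 1)*(ξ 1 : ℂ)+(A 1 2)*(ξ 2 : ℂ))*(ξ 1 : ℂ)+((A 0 2)*(ξ 0 : ℂ)+(A 1 2)*(ξ 1 : ℂ)+(A 2 2)*(ξ 2 : ℂ))*(ξ 2 : ℂ))*(ξ 1 : ℂ)*(ξ 1 : ℂ)) - (((ξ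 0 : ℂ)^2+(ξ 1 : ℂ)^2+(ξ 2 : ℂ)^2)*((A 0 0)+(A 1 1)+(A 2 2))-(((A 0 0)*(ξ 0 : ℂ)+(A 0 1)*(ξ 1 : ℂ)+(A 0 2)*(ξ 2 : ℂ))*(ξ 0 : ℂ)+((A 0 1)*(ξ 0 : ℂ)+(A 1 1)*(ξ 1 : ℂ)+(A 1 2)*(ξ 2 : ℂ))*(ξ 1 : ℂ)+((A 0 2)*(ξ 0 : ℂ)+(A 1 2)*(ξ 1 : ℂ)+(A 2 2)*(ξ 2 : ℂ))*(ξ 2 : ℂ)))*(((ξ 0 : ℂ)^2+(ξ 1 : ℂ)^2+(ξ 2 : ℂ)^2) - (ξ 1 : ℂ)*(ξ 1 : ℂ))) + Complex.normSq (2*(((ξ 0 : ℂ)^2+(ξ 1 : ℂ)^2+(ξ 2 : ℂ)^2)^2*(A 2 2) - ((ξ 0 : ℂ)^2+(ξ 1 : ℂ)^2+(ξ 2 : ℂ)^2)*(ξ 2 : ℂ)*((A 0 2)*(ξ 0 : ℂ)+(A 1 2)*(ξ 1 : ℂ)+(A 2 2)*(ξ 2 : ℂ)) - ((ξ 0 :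 ℂ)^2+(ξ 1 : ℂ)^2+(ξ 2 : ℂ)^2)*((A 0 2)*(ξ 0 : ℂ)+(A 1 2)*(ξ 1 : ℂ)+(A 2 2)*(ξ 2 : ℂ))*(ξ 2 : ℂ) + (((A 0 0)*(ξ 0 : ℂ)+(A 0 1)*(ξ 1 : ℂ)+(A 0 2)*(ξ 2 : ℂ))*(ξ 0 : ℂ)+((A 0 1)*(ξ 0 : ℂ)+(A 1 1)*(ξ 1 : ℂ)+(A 1 2)*(ξ 2 : ℂ))*(ξ 1 : ℂ)+((A 0 2)*(ξ 0 : ℂ)+(A 1 2)*(ξ 1 : ℂ)+(A 2 2)*(ξ 2 : ℂ))*(ξ 2 : ℂ))*(ξ 2 : ℂ)*(ξ 2 : ℂ)) - (((ξ 0 : ℂ)^2+(ξ 1 : ℂ)^2+(ξ 2 : ℂ)^2)*((A 0 0)+(A 1 1)+(A 2 2))-(((A 0 0)*(ξ 0 : ℂ)+(A 0 1)*(ξ 1 : ℂ)+(A 0 2)*(ξ 2 : ℂ))*(ξ 0 : ℂ)+((A 0 1)*(ξ 0 : ℂ)+(A 1 1)*(ξ 1 : ℂ)+(A 1 2)*(ξ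 2 : ℂ))*(ξ 1 : ℂ)+((A 0 2)*(ξ 0 : ℂ)+(A 1 2)*(ξ 1 : ℂ)+(A 2 2)*(ξ 2 : ℂ))*(ξ 2 : ℂ)))*(((ξ 0 : ℂ)^2+(ξ 1 : ℂ)^2+(ξ 2 : ℂ)^2) - (ξ 2 : ℂ)*(ξ 2 : ℂ))) + Complex.normSq (2*(((ξ 0 : ℂ)^2+(ξ 1 : ℂ)^2+(ξ 2 : ℂ)^2)^2*(A 0 1) - ((ξ 0 : ℂ)^2+(ξ 1 : ℂ)^2+(ξ 2 : ℂ)^2)*(ξ 0 : ℂ)*((A 0 1)*(ξ 0 : ℂ)+(A 1 1)*(ξ 1 : ℂ)+(A 1 2)*(ξ 2 : ℂ)) - ((ξ 0 : ℂ)^2+(ξ 1 : ℂ)^2+(ξ 2 : ℂ)^2)*((A 0 0)*(ξ 0 : ℂ)+(A 0 1)*(ξ 1 : ℂ)+(A 0 2)*(ξ 2 : ℂ))*(ξ 1 : ℂ) + (((A 0 0)*(ξ 0 : ℂ)+(A 0 1)*(ξ 1 : ℂ)+(A 0 2)*(ξ 2 : ℂ))*(ξ 0 : ℂ)+((A 0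 1)*(ξ 0 : ℂ)+(A 1 1)*(ξ 1 : ℂ)+(A 1 2)*(ξ 2 : ℂ))*(ξ 1 : ℂ)+((A 0 2)*(ξ 0 : ℂ)+(A 1 2)*(ξ 1 : ℂ)+(A 2 2)*(ξ 2 : ℂ))*(ξ 2 : ℂ))*(ξ 0 : ℂ)*(ξ 1 : ℂ)) - (((ξ 0 : ℂ)^2+(ξ 1 : ℂ)^2+(ξ 2 : ℂ)^2)*((A 0 0)+(A 1 1)+(A 2 2))-(((A 0 0)*(ξ 0 : ℂ)+(A 0 1)*(ξ 1 : ℂ)+(A 0 2)*(ξ 2 : ℂ))*(ξ 0 : ℂ)+((A 0 1)*(ξ 0 : ℂ)+(A 1 1)*(ξ 1 : ℂ)+(A 1 2)*(ξ 2 : ℂ))*(ξ 1 : ℂ)+((A 0 2)*(ξ 0 : ℂ)+(A 1 2)*(ξ 1 : ℂ)+(A 2 2)*(ξ 2 : ℂ))*(ξ 2 : ℂ)))*(0 - (ξ 0 : ℂ)*(ξ 1 : ℂ))) + Complex.normSq (2*(((ξ 0 : ℂ)^2+(ξ 1 : ℂ)^2+(ξ 2 : ℂ)^2)^2*(A 0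 1) - ((ξ 0 : ℂ)^2+(ξ 1 : ℂ)^2+(ξ 2 : ℂ)^2)*(ξ 0 : ℂ)*((A 0 1)*(ξ 0 : ℂ)+(A 1 1)*(ξ 1 : ℂ)+(A 1 2)*(ξ 2 : ℂ)) - ((ξ 0 : ℂ)^2+(ξ 1 : ℂ)^2+(ξ 2 : ℂ)^2)*((A 0 0)*(ξ 0 : ℂ)+(A 0 1)*(ξ 1 : ℂ)+(A 0 2)*(ξ 2 : ℂ))*(ξ 1 : ℂ) + (((A 0 0)*(ξ 0 : ℂ)+(A 0 1)*(ξ 1 : ℂ)+(A 0 2)*(ξ 2 : ℂ))*(ξ 0 : ℂ)+((A 0 1)*(ξ 0 : ℂ)+(A 1 1)*(ξ 1 : ℂ)+(A 1 2)*(ξ 2 : ℂ))*(ξ 1 : ℂ)+((A 0 2)*(ξ 0 : ℂ)+(A 1 2)*(ξ 1 : ℂ)+(A 2 2)*(ξ 2 : ℂ))*(ξ 2 : ℂ))*(ξ 0 : ℂ)*(ξ 1 : ℂ)) - (((ξ 0 : ℂ)^2+(ξ 1 : ℂ)^2+(ξ 2 : ℂ)^2)*((A 0 0)+(A 1 1)+(A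 2 2))-(((A 0 0)*(ξ 0 : ℂ)+(A 0 1)*(ξ 1 : ℂ)+(A 0 2)*(ξ 2 : ℂ))*(ξ 0 : ℂ)+((A 0 1)*(ξ 0 : ℂ)+(A 1 1)*(ξ 1 : ℂ)+(A 1 2)*(ξ 2 : ℂ))*(ξ 1 : ℂ)+((A 0 2)*(ξ 0 : ℂ)+(A 1 2)*(ξ 1 : ℂ)+(A 2 2)*(ξ 2 : ℂ))*(ξ 2 : ℂ)))*(0 - (ξ 0 : ℂ)*(ξ 1 : ℂ))) + Complex.normSq (2*(((ξ 0 : ℂ)^2+(ξ 1 : ℂ)^2+(ξ 2 : ℂ)^2)^2*(A 0 2) - ((ξ 0 : ℂ)^2+(ξ 1 : ℂ)^2+(ξ 2 : ℂ)^2)*(ξ 0 : ℂ)*((A 0 2)*(ξ 0 : ℂ)+(A 1 2)*(ξ 1 : ℂ)+(A 2 2)*(ξ 2 : ℂ)) - ((ξ 0 : ℂ)^2+(ξ 1 : ℂ)^2+(ξ 2 : ℂ)^2)*((A 0 0)*(ξ 0 : ℂ)+(A 0 1)*(ξ 1 : ℂ)+(A 0 2)*(ξ 2 : ℂ))*(ξ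 2 : ℂ) + (((A 0 0)*(ξ 0 : ℂ)+(A 0 1)*(ξ 1 : ℂ)+(A 0 2)*(ξ 2 : ℂ))*(ξ 0 : ℂ)+((A 0 1)*(ξ 0 : ℂ)+(A 1 1)*(ξ 1 : ℂ)+(A 1 2)*(ξ 2 : ℂ))*(ξ 1 : ℂ)+((A 0 2)*(ξ 0 : ℂ)+(A 1 2)*(ξ 1 : ℂ)+(A 2 2)*(ξ 2 : ℂ))*(ξ 2 : ℂ))*(ξ 0 : ℂ)*(ξ 2 : ℂ)) - (((ξ 0 : ℂ)^2+(ξ 1 : ℂ)^2+(ξ 2 : ℂ)^2)*((A 0 0)+(A 1 1)+(A 2 2))-(((A 0 0)*(ξ 0 : ℂ)+(A 0 1)*(ξ 1 : ℂ)+(A 0 2)*(ξ 2 : ℂ))*(ξ 0 : ℂ)+((A 0 1)*(ξ 0 : ℂ)+(A 1 1)*(ξ 1 : ℂ)+(A 1 2)*(ξ 2 : ℂ))*(ξ 1 : ℂ)+((A 0 2)*(ξ 0 : ℂ)+(A 1 2)*(ξ 1 : ℂ)+(A 2 2)*(ξ 2 : ℂ))*(ξ 2 : ℂ)))*(0 -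 (ξ 0 : ℂ)*(ξ 2 : ℂ))) + Complex.normSq (2*(((ξ 0 : ℂ)^2+(ξ 1 : ℂ)^2+(ξ 2 : ℂ)^2)^2*(A 0 2) - ((ξ 0 : ℂ)^2+(ξ 1 : ℂ)^2+(ξ 2 : ℂ)^2)*(ξ 0 : ℂ)*((A 0 2)*(ξ 0 : ℂ)+(A 1 2)*(ξ 1 : ℂ)+(A 2 2)*(ξ 2 : ℂ)) - ((ξ 0 : ℂ)^2+(ξ 1 : ℂ)^2+(ξ 2 : ℂ)^2)*((A 0 0)*(ξ 0 : ℂ)+(A 0 1)*(ξ 1 : ℂ)+(A 0 2)*(ξ 2 : ℂ))*(ξ 2 : ℂ) + (((A 0 0)*(ξ 0 : ℂ)+(A 0 1)*(ξ 1 : ℂ)+(A 0 2)*(ξ 2 : ℂ))*(ξ 0 : ℂ)+((A 0 1)*(ξ 0 : ℂ)+(A 1 1)*(ξ 1 : ℂ)+(A 1 2)*(ξ 2 : ℂ))*(ξ 1 : ℂ)+((A 0 2)*(ξ 0 : ℂ)+(A 1 2)*(ξ 1 : ℂ)+(A 2 2)*(ξ 2 : ℂ))*(ξ 2 : ℂ))*(ξ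 0 : ℂ)*(ξ 2 : ℂ)) - (((ξ 0 : ℂ)^2+(ξ 1 : ℂ)^2+(ξ 2 : ℂ)^2)*((A 0 0)+(A 1 1)+(A 2 2))-(((A 0 0)*(ξ 0 : ℂ)+(A 0 1)*(ξ 1 : ℂ)+(A 0 2)*(ξ 2 : ℂ))*(ξ 0 : ℂ)+((A 0 1)*(ξ 0 : ℂ)+(A 1 1)*(ξ 1 : ℂ)+(A 1 2)*(ξ 2 : ℂ))*(ξ 1 : ℂ)+((A 0 2)*(ξ 0 : ℂ)+(A 1 2)*(ξ 1 : ℂ)+(A 2 2)*(ξ 2 : ℂ))*(ξ 2 : ℂ)))*(0 - (ξ 0 : ℂ)*(ξ 2 : ℂ))) + Complex.normSq (2*(((ξ 0 : ℂ)^2+(ξ 1 : ℂ)^2+(ξ 2 : ℂ)^2)^2*(A 1 2) - ((ξ 0 : ℂ)^2+(ξ 1 : ℂ)^2+(ξ 2 : ℂ)^2)*(ξ 1 : ℂ)*((A 0 2)*(ξ 0 : ℂ)+(A 1 2)*(ξ 1 : ℂ)+(A 2 2)*(ξ 2 : ℂ)) - ((ξ 0 : ℂ)^2+(ξ 1 :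 ℂ)^2+(ξ 2 : ℂ)^2)*((A 0 1)*(ξ 0 : ℂ)+(A 1 1)*(ξ 1 : ℂ)+(A 1 2)*(ξ 2 : ℂ))*(ξ 2 : ℂ) + (((A 0 0)*(ξ 0 : ℂ)+(A 0 1)*(ξ 1 : ℂ)+(A 0 2)*(ξ 2 : ℂ))*(ξ 0 : ℂ)+((A 0 1)*(ξ 0 : ℂ)+(A 1 1)*(ξ 1 : ℂ)+(A 1 2)*(ξ 2 : ℂ))*(ξ 1 : ℂ)+((A 0 2)*(ξ 0 : ℂ)+(A 1 2)*(ξ 1 : ℂ)+(A 2 2)*(ξ 2 : ℂ))*(ξ 2 : ℂ))*(ξ 1 : ℂ)*(ξ 2 : ℂ)) - (((ξ 0 : ℂ)^2+(ξ 1 : ℂ)^2+(ξ 2 : ℂ)^2)*((A 0 0)+(A 1 1)+(A 2 2))-(((A 0 0)*(ξ 0 : ℂ)+(A 0 1)*(ξ 1 : ℂ)+(A 0 2)*(ξ 2 : ℂ))*(ξ 0 : ℂ)+((A 0 1)*(ξ 0 : ℂ)+(A 1 1)*(ξ 1 : ℂ)+(A 1 2)*(ξ 2 : ℂ))*(ξ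 1 : ℂ)+((A 0 2)*(ξ 0 : ℂ)+(A 1 2)*(ξ 1 : ℂ)+(A 2 2)*(ξ 2 : ℂ))*(ξ 2 : ℂ)))*(0 - (ξ 1 : ℂ)*(ξ 2 : ℂ))) + Complex.normSq (2*(((ξ 0 : ℂ)^2+(ξ 1 : ℂ)^2+(ξ 2 : ℂ)^2)^2*(A 1 2) - ((ξ 0 : ℂ)^2+(ξ 1 : ℂ)^2+(ξ 2 : ℂ)^2)*(ξ 1 : ℂ)*((A 0 2)*(ξ 0 : ℂ)+(A 1 2)*(ξ 1 : ℂ)+(A 2 2)*(ξ 2 : ℂ)) - ((ξ 0 : ℂ)^2+(ξ 1 : ℂ)^2+(ξ 2 : ℂ)^2)*((A 0 1)*(ξ 0 : ℂ)+(A 1 1)*(ξ 1 : ℂ)+(A 1 2)*(ξ 2 : ℂ))*(ξ 2 : ℂ) + (((A 0 0)*(ξ 0 : ℂ)+(A 0 1)*(ξ 1 : ℂ)+(A 0 2)*(ξ 2 : ℂ))*(ξ 0 : ℂ)+((A 0 1)*(ξ 0 : ℂ)+(A 1 1)*(ξ 1 : ℂ)+(A 1 2)*(ξ 2 : ℂ))*(ξ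 1 : ℂ)+((A 0 2)*(ξ 0 : ℂ)+(A 1 2)*(ξ 1 : ℂ)+(A 2 2)*(ξ 2 : ℂ))*(ξ 2 : ℂ))*(ξ 1 : ℂ)*(ξ 2 : ℂ)) - (((ξ 0 : ℂ)^2+(ξ 1 : ℂ)^2+(ξ 2 : ℂ)^2)*((A 0 0)+(A 1 1)+(A 2 2))-(((A 0 0)*(ξ 0 : ℂ)+(A 0 1)*(ξ 1 : ℂ)+(A 0 2)*(ξ 2 : ℂ))*(ξ 0 : ℂ)+((A 0 1)*(ξ 0 : ℂ)+(A 1 1)*(ξ 1 : ℂ)+(A 1 2)*(ξ 2 : ℂ))*(ξ 1 : ℂ)+((A 0 2)*(ξ 0 : ℂ)+(A 1 2)*(ξ 1 : ℂ)+(A 2 2)*(ξ 2 : ℂ))*(ξ 2 : ℂ)))*(0 - (ξ 1 : ℂ)*(ξ 2 : ℂ))) : ℝ) : ℂ) := by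
      simp only [secondVariationIntegrand, Fin.sum_univ_three, h10, h20, h21]
      simp only [Complex.ofReal_add, Complex.ofReal_mul, Complex.ofReal_pow,
        Complex.ofReal_ofNat, ← Complex.mul_conj, map_add, map_mul, map_sub, map_pow,
        map_zero, Complex.conj_ofReal, map_ofNat]
      ring
    have hre := congrArg Complex.re hid
    have him := congrArg Complex.im hid
    rw [Complex.re_ofReal_mul, Complex.ofReal_re] at hre
    rw [Complex.im_ofReal_mul, Complex.ofReal_im] at him
    refine ⟨?_, ?_⟩
    · have hSnn : 0 ≤ (4 * (ξ 0 ^ 2 + ξ 1 ^ 2 + ξ 2 ^ 2) ^ 2)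
          * (secondVariationIntegrand A ξ).re := by
        rw [hre]
        repeat' apply add_nonneg
        all_goals first
          | exact Complex.normSq_nonneg _
          | exact mul_self_nonneg _
      nlinarith [hSnn, hn4]
    · exact (mul_eq_zero.1 him).resolve_left (ne_of_gt hn4)
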